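/- arXiv:2007.15192 — 3 statements merged into one kernel-verified Lean document; each statement's English description precedes it below -/
import Mathlib

section
/- Let A ∈ ℝ^{m×n}, c ∈ ℝ^n, λ ∈ ℝ^m, and let x(λ) ∈ {0,1,⋆}^n be the induced partial solution (x(λ)_j = 1, 0, or ⋆ according to sign(c_j − ⟨λ,A^j⟩)). Let x ∈ {0,1}^n and let x* ∈ [0,1]^n satisfy Ax* = Ax, and suppose x* is compatible with x(λ) (agrees with x(λ) on all coordinates where x(λ)_j ≠ ⋆). Then ⟨c, x* − x⟩ = Σ_{j : x(λ)_j ≠ ⋆} |c_j − ⟨λ, A^j⟩| · 1[x_j ≠ x(λ)_j]. -/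
open Finset

/-- the pareto-gap identity. If `x ∈ {0,1}^n`, `x* ∈ [0,1]^n` with
`Ax* = Ax`, and `x*` is compatible with the dual-based partial solution `x(λ)`,
then `⟨c, x* − x⟩ = Σ_{j : x(λ)_j ≠ ⋆} |c_j − ⟨λ,A^j⟩| · 1[x_j ≠ x(λ)_j]`. -/
theorem stmt_8 {m n : ℕ} (A : Matrix (Fin m) (Fin n) ℝ) (c : Fin n → ℝ)
    (lam : Fin m → ℝ) (r : Fin n → ℝ) (hr : r = fun j => c j - ∑ i, lam i * A i j)
    (x xstar : Fin n → ℝ)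
    (hx01 : ∀ j, x j = 0 ∨ x j = 1)
    (hxstar : ∀ j, xstar j ∈ Set.Icc (0:ℝ) 1)
    (heq : A.mulVec xstar = A.mulVec x)
    -- compatibility of x* with x(λ): agreement wherever x(λ)_j ≠ ⋆
    (hcompat : ∀ j, (0 < r j → xstar j = 1) ∧ (r j < 0 → xstar j = 0)) :
    ∑ j, c j * (xstar j - x j)
      = ∑ j ∈ Finset.univ.filter (fun j => r j ≠ 0),
          |r j| * (if x j = (if 0 < r j then 1 else 0) then 0 else 1) := by
  have key : ∑ j, c j * (xstar j - x j) = ∑ j, r j * (xstar j - x j) := by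
    have h0 : ∑ j, (∑ i, lam i * A i j) * (xstar j - x j) = 0 := by
      have : ∑ j, (∑ i, lam i * A i j) * (xstar j - x j)
          = ∑ i, lam i * ((A.mulVec xstar) i - (A.mulVec x) i) := by
        simp only [Finset.sum_mul]
        rw [Finset.sum_comm]
        simp only [Matrix.mulVec, dotProduct, mul_sub, Finset.mul_sum,
          Finset.sum_sub_distrib, mul_assoc]
      rw [this, heq]
      simp
    subst hr
    simp only [sub_mul]
    rw [Finset.sum_sub_distrib, h0, sub_zero]
  rw [key, Finset.sum_filter]
  apply Finset.sum_congr rfl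
  intro j _
  rcases lt_trichotomy (r j) 0 with h | h | h
  · have hx0 : xstar j = 0 := (hcompat j).2 h
    rcases hx01 j with hx | hx <;>
      simp [hx, hx0, h.ne, not_lt.mpr h.le, abs_of_neg h] <;> ring
  · simp [h]
  · have hx1 : xstar j = 1 := (hcompat j).1 h
    rcases hx01 j with hx | hx <;>
      simp [hx, hx1, h.ne', h, abs_of_pos h]
end

section
/- With the setup of the previous identity, if additionally pareto(x) := ⟨c, x*⟩ − ⟨c, x⟩ ≤ Γ for some Γ ≥ 0, then for every ℓ ≥ 1 the number of coordinates j with x(λ)_j ≠ ⋆, d((c_j,A^j), H(λ)) ∈ ((log n / n)·2^ℓ, (log n / n)·2^{ℓ+1}], and x_j ≠ x(λ)_j is at most Γ·n/(log n · 2^ℓ). -/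
open Finset

/-- with the setup of the pareto-gap identity, if
`pareto(x) = ⟨c,x*⟩ − ⟨c,x⟩ ≤ Γ`, then for every `ℓ ≥ 1` the number of
coordinates `j` with `x(λ)_j ≠ ⋆`, distance of the column `(c_j, A^j)` to `H(λ)`
in `((log n / n)·2^ℓ, (log n / n)·2^{ℓ+1}]`, and `x_j ≠ x(λ)_j`, is at most
`Γ·n / (log n · 2^ℓ)`. -/
theorem stmt_9 {m n : ℕ} (hn : 2 ≤ n)
    (A : Matrix (Fin m) (Fin n) ℝ) (c : Fin n → ℝ)
    (lam : Fin m → ℝ) (r : Fin n → ℝ) (hr : r = fun j => c j - ∑ i, lam i * A i j)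
    (H : Set (EuclideanSpace ℝ (Fin (m + 1))))
    (hH : H = {y | (1 : ℝ) * y 0 + ∑ i, (-lam i) * y i.succ = 0})
    (x xstar : Fin n → ℝ)
    (hx01 : ∀ j, x j = 0 ∨ x j = 1)
    (hxstar : ∀ j, xstar j ∈ Set.Icc (0:ℝ) 1)
    (heq : A.mulVec xstar = A.mulVec x)
    (hcompat : ∀ j, (0 < r j → xstar j = 1) ∧ (r j < 0 → xstar j = 0))
    (Γ : ℝ) (hΓ : 0 ≤ Γ)
    (hpareto : (∑ j, c j * xstar j) - ∑ j, c j * x j ≤ Γ)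
    (ℓ : ℕ) (hℓ : 1 ≤ ℓ) :
    ((Finset.univ.filter (fun j : Fin n => r j ≠ 0 ∧
        Metric.infDist (show EuclideanSpace ℝ (Fin (m + 1)) from
          WithLp.toLp 2 (Fin.cons (c j) (fun i => A i j) : Fin (m + 1) → ℝ)) H
          ∈ Set.Ioc (Real.log n / n * 2 ^ ℓ) (Real.log n / n * 2 ^ (ℓ + 1)) ∧
        x j ≠ (if 0 < r j then 1 else 0))).card : ℝ)
      ≤ Γ * n / (Real.log n * 2 ^ ℓ) := by
  have hn0 : (0:ℝ) < n := by positivity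
  have hlog : 0 < Real.log n := Real.log_pos (by exact_mod_cast hn)
  set τ : ℝ := Real.log n / n * 2 ^ ℓ with hτdef
  have hτ : 0 < τ := by positivity
  set S := (Finset.univ.filter (fun j : Fin n => r j ≠ 0 ∧
        Metric.infDist (show EuclideanSpace ℝ (Fin (m + 1)) from
          WithLp.toLp 2 (Fin.cons (c j) (fun i => A i j) : Fin (m + 1) → ℝ)) H
          ∈ Set.Ioc (Real.log n / n * 2 ^ ℓ) (Real.log n / n * 2 ^ (ℓ + 1)) ∧
        x j ≠ (if 0 < r j then 1 else 0))) with hS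
  -- the distance to the hyperplane is at most |r j|
  have hdist : ∀ j : Fin n,
      Metric.infDist (show EuclideanSpace ℝ (Fin (m + 1)) from
        WithLp.toLp 2 (Fin.cons (c j) (fun i => A i j) : Fin (m + 1) → ℝ)) H ≤ |r j| := by
    intro j
    set y : EuclideanSpace ℝ (Fin (m + 1)) := WithLp.toLp 2 (Fin.cons (c j) (fun i => A i j) : Fin (m + 1) → ℝ) with hy
    set p : EuclideanSpace ℝ (Fin (m + 1)) := WithLp.toLp 2 (Fin.cons (c j - r j) (fun i => A i j) : Fin (m + 1) → ℝ) with hp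
    have hrj : r j = c j - ∑ i, lam i * A i j := by rw [hr]
    have hpH : p ∈ H := by
      rw [hH]
      show (1 : ℝ) * p 0 + ∑ i, (-lam i) * p i.succ = 0
      have h0 : p 0 = c j - r j := rfl
      have hsum : ∑ i, (-lam i) * p i.succ = -∑ i, lam i * A i j := by
        rw [← Finset.sum_neg_distrib]
        exact Finset.sum_congr rfl fun i _ => by
          show -lam i * A i j = -(lam i * A i j); ring
      rw [hsum, h0, hrj]
      ring
    have hd : dist y p = |r j| := by
      rw [EuclideanSpace.dist_eq]
      have : ∑ i, (y i - p i) ^ 2 = r j ^ 2 := by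
        rw [Fin.sum_univ_succ]
        have h0 : y 0 - p 0 = r j := by
          show c j - (c j - r j) = r j; ring
        have hs : ∀ i : Fin m, y i.succ - p i.succ = 0 := fun i => by
          show A i j - A i j = 0; ring
        simp [h0, hs]
      simp only [Real.dist_eq, sq_abs]
      rw [this, Real.sqrt_sq_eq_abs]
    calc Metric.infDist y H ≤ dist y p := Metric.infDist_le_dist_of_mem hpH
      _ = |r j| := hd
  -- key identity: pareto gap equals ∑ r j (xstar j - x j)
  have hz : ∀ i, ∑ j, A i j * xstar j = ∑ j, A i j * x j := fun i => by
    have := congrFun heq i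
    simpa [Matrix.mulVec, dotProduct] using this
  have hswap : ∑ j, (∑ i, lam i * A i j) * (xstar j - x j) = 0 := by
    calc ∑ j, (∑ i, lam i * A i j) * (xstar j - x j)
        = ∑ i, ∑ j, lam i * (A i j * xstar j - A i j * x j) := by
          rw [Finset.sum_comm]
          refine Finset.sum_congr rfl fun j _ => ?_
          rw [Finset.sum_mul]
          exact Finset.sum_congr rfl fun i _ => by ring
      _ = 0 := by
          refine Finset.sum_eq_zero fun i _ => ?_
          rw [← Finset.mul_sum]
          have : ∑ j, (A i j * xstar j - A i j * x j) = 0 := by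
            rw [Finset.sum_sub_distrib, hz i, sub_self]
          rw [this, mul_zero]
  have hkey : (∑ j, c j * xstar j) - ∑ j, c j * x j = ∑ j, r j * (xstar j - x j) := by
    have expand : ∑ j, r j * (xstar j - x j)
        = (∑ j, (c j * xstar j - c j * x j)) - ∑ j, (∑ i, lam i * A i j) * (xstar j - x j) := by
      rw [← Finset.sum_sub_distrib]
      refine Finset.sum_congr rfl fun j _ => ?_
      rw [hr]; ring
    rw [expand, hswap, sub_zero, Finset.sum_sub_distrib]
  -- all terms nonnegative
  have hterm : ∀ j, 0 ≤ r j * (xstar j - x j) := by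
    intro j
    rcases lt_trichotomy (r j) 0 with h | h | h
    · have h0 : xstar j = 0 := (hcompat j).2 h
      rcases hx01 j with hx | hx <;> rw [h0, hx] <;> nlinarith
    · simp [h]
    · have h1 : xstar j = 1 := (hcompat j).1 h
      rcases hx01 j with hx | hx <;> rw [h1, hx] <;> nlinarith
  -- terms on S are at least τ
  have hbig : ∀ j ∈ S, τ ≤ r j * (xstar j - x j) := by
    intro j hj
    rw [hS, Finset.mem_filter] at hj
    obtain ⟨_, hne, hdI, hxne⟩ := hj
    have hlt : τ < |r j| := lt_of_lt_of_le hdI.1 (hdist j)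
    rcases lt_trichotomy (r j) 0 with h | h | h
    · have h0 : xstar j = 0 := (hcompat j).2 h
      have hnot : ¬ (0 < r j) := by linarith
      rw [if_neg hnot] at hxne
      have hx1 : x j = 1 := (hx01 j).resolve_left hxne
      rw [h0, hx1]
      have : |r j| = -r j := abs_of_neg h
      linarith [this ▸ hlt]
    · exact absurd h hne
    · have h1 : xstar j = 1 := (hcompat j).1 h
      rw [if_pos h] at hxne
      have hx0 : x j = 0 := (hx01 j).resolve_right hxne
      rw [h1, hx0]
      have : |r j| = r j := abs_of_pos h
      linarith [this ▸ hlt]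
  -- sum bound
  have hcard : (S.card : ℝ) * τ ≤ Γ := by
    calc (S.card : ℝ) * τ = ∑ _j ∈ S, τ := by rw [Finset.sum_const, nsmul_eq_mul]
      _ ≤ ∑ j ∈ S, r j * (xstar j - x j) := Finset.sum_le_sum hbig
      _ ≤ ∑ j, r j * (xstar j - x j) :=
          Finset.sum_le_sum_of_subset_of_nonneg (Finset.subset_univ S)
            (fun j _ _ => hterm j)
      _ = (∑ j, c j * xstar j) - ∑ j, c j * x j := hkey.symm
      _ ≤ Γ := hpareto
  have hτn : τ * n = Real.log n * 2 ^ ℓ := by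
    rw [hτdef]; field_simp
  rw [le_div_iff₀ (by positivity : (0:ℝ) < Real.log n * 2 ^ ℓ)]
  calc (S.card : ℝ) * (Real.log n * 2 ^ ℓ) = (S.card : ℝ) * τ * n := by rw [mul_assoc, hτn]
    _ ≤ Γ * n := by nlinarith
end

section
/- Consider branch-and-bound with variable branching and best-bound node selection applied to max{⟨c,x⟩ : Ax ≤ b, x ∈ {0,1}^n} with A having m rows. Let IPGap(b) = OPT(LP relaxation) − OPT(IP), let pareto(x) = LP_=(Ax) − ⟨c,x⟩ for x ∈ {0,1}^n (where LP_=(b') = max{⟨c,x⟩ : Ax = b', x ∈ [0,1]^n}), and let G = {x ∈ {0,1}^n : pareto(x) ≤ IPGap(b)}. Then the final branch-and-bound tree has at most 2·|G|·Σ_{i=0}^{m} C(n,i) + 1 nodes. -/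
open Finset

/-! STATEMENT 19: branch-and-bound with variable branching and best-bound node
selection applied to `max {⟨c,x⟩ : Ax ≤ b, x ∈ {0,1}^n}` produces a tree with at
most `2·|G|·Σ_{i=0}^m C(n,i) + 1` nodes, where `G` is the set of good 0/1 points
(pareto gap at most the integrality gap). -/

/-- Objective value `⟨c,x⟩`. -/
def dotc {n : ℕ} (c x : Fin n → ℝ) : ℝ := ∑ j, c j * x j

/-- Optimal value of the 0/1 integer program `max {⟨c,x⟩ : Ax ≤ b, x ∈ {0,1}^n}`. -/
noncomputable def ipOpt {m n : ℕ} (A : Matrix (Fin m) (Fin n) ℝ) (b : Fin m → ℝ)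
    (c : Fin n → ℝ) : ℝ :=
  sSup {v | ∃ x : Fin n → ℝ, (∀ j, x j = 0 ∨ x j = 1) ∧
    (∀ i, A.mulVec x i ≤ b i) ∧ v = dotc c x}

/-- Optimal value of the LP relaxation `max {⟨c,x⟩ : Ax ≤ b, x ∈ [0,1]^n}`. -/
noncomputable def lpOpt {m n : ℕ} (A : Matrix (Fin m) (Fin n) ℝ) (b : Fin m → ℝ)
    (c : Fin n → ℝ) : ℝ :=
  sSup {v | ∃ x : Fin n → ℝ, (∀ j, x j ∈ Set.Icc (0:ℝ) 1) ∧
    (∀ i, A.mulVec x i ≤ b i) ∧ v = dotc c x}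

/-- Optimal value of the equality-constrained LP `max {⟨c,x⟩ : Ax = b', x ∈ [0,1]^n}`. -/
noncomputable def lpEq {m n : ℕ} (A : Matrix (Fin m) (Fin n) ℝ) (b' : Fin m → ℝ)
    (c : Fin n → ℝ) : ℝ :=
  sSup {v | ∃ x : Fin n → ℝ, (∀ j, x j ∈ Set.Icc (0:ℝ) 1) ∧
    A.mulVec x = b' ∧ v = dotc c x}

/-- Integrality gap `IPGap(b) = OPT(LP) − OPT(IP)`. -/
noncomputable def ipGap {m n : ℕ} (A : Matrix (Fin m) (Fin n) ℝ) (b : Fin m → ℝ)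
    (c : Fin n → ℝ) : ℝ := lpOpt A b c - ipOpt A b c

/-- The set `G` of good 0/1 points: `pareto(x) = LP_=(Ax) − ⟨c,x⟩ ≤ IPGap(b)`. -/
noncomputable def goodSet {m n : ℕ} (A : Matrix (Fin m) (Fin n) ℝ) (b : Fin m → ℝ)
    (c : Fin n → ℝ) : Set (Fin n → ℝ) :=
  {x | (∀ j, x j = 0 ∨ x j = 1) ∧ lpEq A (A.mulVec x) c - dotc c x ≤ ipGap A b c}

/-- A branch-and-bound tree: a leaf (pruned node), or a branched node carrying the
optimal solution `xN` of its LP and the branching variable `j`, with the two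
subtrees corresponding to `x_j = 0` and `x_j = 1`. -/
inductive BBTree (n : ℕ) : Type where
  | leaf : BBTree n
  | branch (xN : Fin n → ℝ) (j : Fin n) (l r : BBTree n) : BBTree n

/-- Number of nodes of a branch-and-bound tree. -/
def BBTree.numNodes {n : ℕ} : BBTree n → ℕ
  | .leaf => 1
  | .branch _ _ l r => l.numNodes + r.numNodes + 1

/-- Validity of a branch-and-bound tree with variable branching and best-bound node
selection, relative to the current fixings `J0` (variables fixed to 0) and `J1`
(variables fixed to 1). At each branched node: `xN` is an optimal solution of the
node's LP with at most `m` fractional coordinates, its value is at least the IP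
optimum (the best-bound property, Lemma 2.1 of the paper), and branching occurs on
a fractional coordinate `j` of `xN` not yet fixed. -/
def BBValid {m n : ℕ} (A : Matrix (Fin m) (Fin n) ℝ) (b : Fin m → ℝ) (c : Fin n → ℝ) :
    Finset (Fin n) → Finset (Fin n) → BBTree n → Prop
  | _, _, .leaf => True
  | J0, J1, .branch xN j l r =>
      (∀ i, xN i ∈ Set.Icc (0:ℝ) 1) ∧
      (∀ i, A.mulVec xN i ≤ b i) ∧
      (∀ i ∈ J0, xN i = 0) ∧ (∀ i ∈ J1, xN i = 1) ∧
      -- xN is optimal for the node's LP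
      (∀ y : Fin n → ℝ, (∀ i, y i ∈ Set.Icc (0:ℝ) 1) → (∀ i, A.mulVec y i ≤ b i) →
        (∀ i ∈ J0, y i = 0) → (∀ i ∈ J1, y i = 1) → dotc c y ≤ dotc c xN) ∧
      -- xN has at most m fractional coordinates (vertex solution, Lemma 2.2)
      (Finset.univ.filter (fun i => xN i ∈ Set.Ioo (0:ℝ) 1)).card ≤ m ∧
      -- best-bound selection: never branch on a node with LP value below the IP optimum
      ipOpt A b c ≤ dotc c xN ∧
      -- branch on a fractional, not yet fixed, coordinate
      xN j ∈ Set.Ioo (0:ℝ) 1 ∧ j ∉ J0 ∧ j ∉ J1 ∧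
      BBValid A b c (insert j J0) J1 l ∧ BBValid A b c J0 (insert j J1) r

section S19AuxSection
open Pointwise
namespace S19

lemma dotc_le {n : ℕ} (c x : Fin n → ℝ) (hx : ∀ j, x j ∈ Set.Icc (0:ℝ) 1) :
    dotc c x ≤ ∑ j, |c j| := by
  refine Finset.sum_le_sum fun j _ => ?_
  obtain ⟨h0, h1⟩ := hx j
  rcases le_or_gt 0 (c j) with h | h
  · calc c j * x j ≤ c j * 1 := by nlinarith
      _ ≤ |c j| := by rw [mul_one]; exact le_abs_self _
  · calc c j * x j ≤ 0 := by nlinarith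
      _ ≤ |c j| := abs_nonneg _

lemma bddAbove_lpSet {m n : ℕ} (A : Matrix (Fin m) (Fin n) ℝ) (b : Fin m → ℝ)
    (c : Fin n → ℝ) : BddAbove {v | ∃ x : Fin n → ℝ, (∀ j, x j ∈ Set.Icc (0:ℝ) 1) ∧
      (∀ i, A.mulVec x i ≤ b i) ∧ v = dotc c x} := by
  refine ⟨∑ j, |c j|, fun v hv => ?_⟩
  obtain ⟨x, hx, -, rfl⟩ := hv
  exact dotc_le c x hx

lemma le_lpOpt {m n : ℕ} {A : Matrix (Fin m) (Fin n) ℝ} {b : Fin m → ℝ}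
    {c : Fin n → ℝ} {x : Fin n → ℝ} (hx : ∀ j, x j ∈ Set.Icc (0:ℝ) 1)
    (hf : ∀ i, A.mulVec x i ≤ b i) : dotc c x ≤ lpOpt A b c :=
  le_csSup (bddAbove_lpSet A b c) ⟨x, hx, hf, rfl⟩

/-- The linear map `x ↦ (Ax, ⟨c,x⟩)`. -/
noncomputable def phiL {m n : ℕ} (A : Matrix (Fin m) (Fin n) ℝ) (c : Fin n → ℝ) :
    (Fin n → ℝ) →ₗ[ℝ] (Fin m → ℝ) × ℝ where
  toFun x := (A.mulVec x, dotc c x)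
  map_add' x y := by
    ext i
    · simp [Matrix.mulVec_add]
    · simp [dotc, mul_add, Finset.sum_add_distrib]
  map_smul' r x := by
    ext i
    · simp [Matrix.mulVec_smul]
    · simp [dotc, Finset.mul_sum]
      exact Finset.sum_congr rfl fun j _ => by ring

/-- ε-approximate LP duality, via separation. -/
lemma dual_approx {m n : ℕ} (A : Matrix (Fin m) (Fin n) ℝ) (b : Fin m → ℝ)
    (c : Fin n → ℝ) (x0 : Fin n → ℝ) (hx0 : ∀ j, x0 j ∈ Set.Icc (0:ℝ) 1)
    (hf0 : ∀ i, A.mulVec x0 i ≤ b i) {ε : ℝ} (hε : 0 < ε) :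
    ∃ u : Fin m → ℝ, (∀ i, 0 ≤ u i) ∧ ∀ x : Fin n → ℝ, (∀ j, x j ∈ Set.Icc (0:ℝ) 1) →
      dotc c x + ∑ i, u i * (b i - A.mulVec x i) < lpOpt A b c + ε := by
  classical
  set K : Set (Fin n → ℝ) := Set.pi Set.univ (fun _ => Set.Icc (0:ℝ) 1) with hK
  have hKmem : ∀ x : Fin n → ℝ, x ∈ K ↔ ∀ j, x j ∈ Set.Icc (0:ℝ) 1 := by
    intro x
    constructor
    · intro h j; exact h j (Set.mem_univ _)
    · intro h j _; exact h j
  have hKcpt : IsCompact K := isCompact_univ_pi fun _ => isCompact_Icc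
  have hKconv : Convex ℝ K := convex_pi fun _ _ => convex_Icc 0 1
  set D : Set ((Fin m → ℝ) × ℝ) := {p | (∀ i, 0 ≤ p.1 i) ∧ p.2 ≤ 0} with hD
  have hDconv : Convex ℝ D := by
    intro p hp q hq a b' ha hb hab
    refine ⟨fun i => ?_, ?_⟩
    · have := hp.1 i; have := hq.1 i
      simp only [Prod.fst_add, Prod.smul_fst, Pi.add_apply, Pi.smul_apply, smul_eq_mul]
      nlinarith
    · have := hp.2; have := hq.2
      simp only [Prod.snd_add, Prod.smul_snd, smul_eq_mul]
      nlinarith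
  have hDclosed : IsClosed D := by
    have : D = (⋂ i, {p : (Fin m → ℝ) × ℝ | 0 ≤ p.1 i}) ∩ {p | p.2 ≤ 0} := by
      ext p; simp [hD, Set.mem_iInter]
    rw [this]
    exact (isClosed_iInter fun i => isClosed_le continuous_const
      (show Continuous fun p : (Fin m → ℝ) × ℝ => p.1 i from (continuous_apply i).comp continuous_fst)).inter
      (isClosed_le continuous_snd continuous_const)
  set C : Set ((Fin m → ℝ) × ℝ) := (phiL A c) '' K + D with hC
  have hphiCont : Continuous (phiL A c) := (phiL A c).continuous_of_finiteDimensional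
  have hCconv : Convex ℝ C := (hKconv.linear_image (phiL A c)).add hDconv
  have hCclosed : IsClosed C := hDclosed.add_left_of_isCompact (hKcpt.image hphiCont)
  have hp0 : ((b, lpOpt A b c + ε) : (Fin m → ℝ) × ℝ) ∉ C := by
    rintro ⟨q, hq, d, hd, hsum⟩
    obtain ⟨x, hxK, rfl⟩ := hq
    have h1 : ∀ i, A.mulVec x i + d.1 i = b i := by
      intro i
      have := congrArg (fun p => p.1 i) hsum
      simpa [phiL] using this
    have h2 : dotc c x + d.2 = lpOpt A b c + ε := by
      have := congrArg Prod.snd hsum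
      simpa [phiL] using this
    have hxf : ∀ i, A.mulVec x i ≤ b i := by
      intro i; have := hd.1 i; linarith [h1 i]
    have := le_lpOpt (c := c) ((hKmem x).mp hxK) hxf
    have := hd.2
    linarith
  obtain ⟨f, β, hfC, hfp⟩ := geometric_hahn_banach_closed_point hCconv hCclosed hp0
  -- notation
  set w : Fin m → ℝ := fun i => f ((Pi.single i 1 : Fin m → ℝ), (0:ℝ)) with hw
  set α : ℝ := f ((0 : Fin m → ℝ), (1:ℝ)) with hα
  clear_value w α
  have hx0K : x0 ∈ K := (hKmem x0).mpr hx0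
  have hy0 : (phiL A c) x0 ∈ C := ⟨(phiL A c) x0, ⟨x0, hx0K, rfl⟩, 0, ⟨fun i => le_refl 0, le_refl 0⟩, add_zero _⟩
  have hy0lt : f ((phiL A c) x0) < β := hfC _ hy0
  -- coefficients on recession directions
  have hwle : ∀ i, w i ≤ 0 := by
    intro i
    by_contra h
    push_neg at h
    have hne : w i ≠ 0 := ne_of_gt h
    obtain ⟨M, hMpos, hMw⟩ : ∃ M : ℝ, 0 < M ∧ M * w i = β - f ((phiL A c) x0) + w i := by
      refine ⟨(β - f ((phiL A c) x0) + w i) / w i, div_pos (by linarith) h, ?_⟩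
      field_simp
    have hmem : (phiL A c) x0 + (M • (Pi.single i 1 : Fin m → ℝ), (0:ℝ)) ∈ C := by
      refine ⟨(phiL A c) x0, ⟨x0, hx0K, rfl⟩, (M • (Pi.single i 1 : Fin m → ℝ), (0:ℝ)), ⟨fun i' => ?_, le_refl 0⟩, rfl⟩
      simp only [Pi.smul_apply, smul_eq_mul]
      rcases eq_or_ne i i' with rfl | hne
      · simp; positivity
      · simp [Pi.single_apply, hne.symm]
    have hlt := hfC _ hmem
    have heval : f ((phiL A c) x0 + (M • (Pi.single i 1 : Fin m → ℝ), (0:ℝ)))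
        = f ((phiL A c) x0) + M * w i := by
      rw [map_add]
      congr 1
      have : ((M • (Pi.single i 1 : Fin m → ℝ), (0:ℝ)) : (Fin m → ℝ) × ℝ)
          = M • ((Pi.single i 1 : Fin m → ℝ), (0:ℝ)) := by
        ext <;> simp
      rw [this, map_smul]; simp [hw]
    rw [heval] at hlt
    linarith
  have hαge : 0 ≤ α := by
    by_contra h
    push_neg at h
    have hne : α ≠ 0 := ne_of_lt h
    obtain ⟨t, htpos, htw⟩ : ∃ t : ℝ, 0 < t ∧ (-t) * α = β - f ((phiL A c) x0) + (-α) := by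
      refine ⟨(β - f ((phiL A c) x0) + (-α)) / (-α), div_pos (by linarith) (by linarith), ?_⟩
      have h2 : -((β - f ((phiL A c) x0) + (-α)) / (-α)) = (β - f ((phiL A c) x0) + (-α)) / α := by
        rw [div_neg, neg_neg]
      rw [h2, div_mul_cancel₀ _ hne]
    have hmem : (phiL A c) x0 + ((0 : Fin m → ℝ), -t) ∈ C := by
      exact ⟨(phiL A c) x0, ⟨x0, hx0K, rfl⟩, ((0 : Fin m → ℝ), -t), ⟨fun i' => le_refl 0, by simpa using htpos.le⟩, rfl⟩
    have hlt := hfC _ hmem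
    have heval : f ((phiL A c) x0 + ((0 : Fin m → ℝ), -t)) = f ((phiL A c) x0) + (-t) * α := by
      rw [map_add]
      congr 1
      have : (((0 : Fin m → ℝ), -t) : (Fin m → ℝ) × ℝ) = (-t) • ((0 : Fin m → ℝ), (1:ℝ)) := by
        ext <;> simp
      rw [this, map_smul]; simp [hα]
    rw [heval] at hlt
    linarith
  -- decomposition of f
  have hdec : ∀ (v : Fin m → ℝ) (t : ℝ), f (v, t) = (∑ i, v i * w i) + t * α := by
    intro v t
    have hsplit : ((v, t) : (Fin m → ℝ) × ℝ)
        = (∑ i, v i • ((Pi.single i 1 : Fin m → ℝ), (0:ℝ))) + t • ((0 : Fin m → ℝ), (1:ℝ)) := by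
      ext j
      · simp only [Prod.fst_add, Prod.fst_sum, Prod.smul_fst, Prod.smul_snd, smul_eq_mul]
        simp only [Finset.sum_apply, Pi.add_apply, Pi.smul_apply, Pi.single_apply, smul_eq_mul]
        simp [Finset.sum_ite_eq, mul_ite]
      · simp [Prod.snd_sum]
    rw [hsplit, map_add, map_sum, map_smul]
    simp only [map_smul, smul_eq_mul]
    simp [hw, hα]
  -- f evaluated on Φx for x ∈ K, and at the point
  have hfphi : ∀ x : Fin n → ℝ, f ((phiL A c) x) = (∑ i, A.mulVec x i * w i) + dotc c x * α := by
    intro x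
    have : (phiL A c) x = ((A.mulVec x, dotc c x) : (Fin m → ℝ) × ℝ) := rfl
    rw [this, hdec]
  have hfpt : f ((b, lpOpt A b c + ε) : (Fin m → ℝ) × ℝ) = (∑ i, b i * w i) + (lpOpt A b c + ε) * α := hdec b (lpOpt A b c + ε)
  have hαpos : 0 < α := by
    rcases lt_or_eq_of_le hαge with h | h
    · exact h
    have h0 : ∀ x ∈ K, (∑ i, A.mulVec x i * w i) < β := by
      intro x hxK
      have hmem : (phiL A c) x ∈ C := ⟨(phiL A c) x, ⟨x, hxK, rfl⟩, 0, ⟨fun i => le_refl 0, le_refl 0⟩, add_zero _⟩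
      have := hfC _ hmem
      rw [hfphi x, ← h] at this
      simpa using this
    have hβlt : β < ∑ i, b i * w i := by
      have := hfp
      rw [hfpt, ← h] at this
      simpa using this
    have hcmp : ∑ i, b i * w i ≤ ∑ i, A.mulVec x0 i * w i := by
      refine Finset.sum_le_sum fun i _ => ?_
      have h1 := hwle i
      have h2 := hf0 i
      nlinarith
    have := h0 x0 hx0K
    linarith
  -- the multipliers
  refine ⟨fun i => -w i / α, fun i => div_nonneg (by linarith [hwle i]) hαpos.le, ?_⟩
  intro x hx
  have hmem : (phiL A c) x ∈ C :=
    ⟨(phiL A c) x, ⟨x, (hKmem x).mpr hx, rfl⟩, 0, ⟨fun i => le_refl 0, le_refl 0⟩, add_zero _⟩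
  have hlt : (∑ i, A.mulVec x i * w i) + dotc c x * α
      < (∑ i, b i * w i) + (lpOpt A b c + ε) * α := by
    have h1 := hfC _ hmem
    have h2 := hfp
    rw [hfphi x] at h1
    rw [hfpt] at h2
    linarith
  have hsum1 : ∑ i, A.mulVec x i * w i = α * (-(∑ i, (-w i / α) * A.mulVec x i)) := by
    rw [← Finset.sum_neg_distrib, Finset.mul_sum]
    refine Finset.sum_congr rfl fun i _ => ?_
    field_simp
  have hsum2 : ∑ i, b i * w i = α * (-(∑ i, (-w i / α) * b i)) := by
    rw [← Finset.sum_neg_distrib, Finset.mul_sum]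
    refine Finset.sum_congr rfl fun i _ => ?_
    field_simp
  have hexp : ∑ i, (-w i / α) * (b i - A.mulVec x i)
      = (∑ i, (-w i / α) * b i) - ∑ i, (-w i / α) * A.mulVec x i := by
    rw [← Finset.sum_sub_distrib]
    exact Finset.sum_congr rfl fun i _ => by ring
  rw [hexp]
  rw [hsum1, hsum2] at hlt
  nlinarith [hlt, hαpos]


lemma repr_dotc {m n : ℕ} (A : Matrix (Fin m) (Fin n) ℝ) (c : Fin n → ℝ)
    (u : Fin m → ℝ) (z : Fin n → ℝ) :
    dotc c z = (∑ j, (c j - ∑ i, u i * A i j) * z j) + ∑ i, u i * A.mulVec z i := by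
  have h1 : ∑ i, u i * A.mulVec z i = ∑ j, (∑ i, u i * A i j) * z j := by
    simp only [Matrix.mulVec, dotProduct, Finset.mul_sum, Finset.sum_mul]
    rw [Finset.sum_comm]
    exact Finset.sum_congr rfl fun j _ => Finset.sum_congr rfl fun i _ => by ring
  rw [h1, ← Finset.sum_add_distrib]
  unfold dotc
  exact Finset.sum_congr rfl fun j _ => by ring

lemma exists_good {m n : ℕ} (A : Matrix (Fin m) (Fin n) ℝ) (b : Fin m → ℝ) (c : Fin n → ℝ)
    (xN : Fin n → ℝ) (hbox : ∀ j, xN j ∈ Set.Icc (0:ℝ) 1)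
    (hfeas : ∀ i, A.mulVec xN i ≤ b i) (hbb : ipOpt A b c ≤ dotc c xN) :
    ∃ xb : Fin n → ℝ, xb ∈ goodSet A b c ∧
      ∀ j, xN j ∉ Set.Ioo (0:ℝ) 1 → xb j = xN j := by
  classical
  set cand : Finset (Fin n) → (Fin n → ℝ) :=
    fun S j => if xN j ∈ Set.Ioo (0:ℝ) 1 then (if j ∈ S then (1:ℝ) else 0) else xN j with hcand
  have hcand1 : ∀ S (j : Fin n), xN j ∈ Set.Ioo (0:ℝ) 1 → j ∈ S → cand S j = 1 := by
    intro S j h hj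
    simp only [hcand]
    rw [if_pos h, if_pos hj]
  have hcand0 : ∀ S (j : Fin n), xN j ∈ Set.Ioo (0:ℝ) 1 → j ∉ S → cand S j = 0 := by
    intro S j h hj
    simp only [hcand]
    rw [if_pos h, if_neg hj]
  have hcandN : ∀ S (j : Fin n), xN j ∉ Set.Ioo (0:ℝ) 1 → cand S j = xN j := by
    intro S j h
    simp only [hcand]
    rw [if_neg h]
  have hcbox : ∀ S, ∀ j, cand S j ∈ Set.Icc (0:ℝ) 1 := by
    intro S j
    by_cases h : xN j ∈ Set.Ioo (0:ℝ) 1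
    · by_cases h2 : j ∈ S
      · rw [hcand1 S j h h2]; constructor <;> norm_num
      · rw [hcand0 S j h h2]; constructor <;> norm_num
    · rw [hcandN S j h]; exact hbox j
  have hc01 : ∀ S, ∀ j, cand S j = 0 ∨ cand S j = 1 := by
    intro S j
    by_cases h : xN j ∈ Set.Ioo (0:ℝ) 1
    · by_cases h2 : j ∈ S
      · exact Or.inr (hcand1 S j h h2)
      · exact Or.inl (hcand0 S j h h2)
    · obtain ⟨h0, h1⟩ := hbox j
      have hx : xN j = 0 ∨ xN j = 1 := by
        rcases eq_or_lt_of_le h0 with he | hlt0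
        · exact Or.inl he.symm
        rcases eq_or_lt_of_le h1 with he | hlt1
        · exact Or.inr he
        exact absurd ⟨hlt0, hlt1⟩ h
      rw [hcandN S j h]
      exact hx
  set gval : Finset (Fin n) → ℝ :=
    fun S => lpEq A (A.mulVec (cand S)) c - dotc c (cand S) with hgval
  have stepA : ∀ ε : ℝ, 0 < ε → ∃ S, gval S ≤ lpOpt A b c - dotc c xN + ε := by
    intro ε hε
    obtain ⟨u, hu, hkey⟩ := dual_approx A b c xN hbox hfeas hε
    set r : Fin n → ℝ := fun j => c j - ∑ i, u i * A i j with hr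
    refine ⟨Finset.univ.filter (fun j => 0 ≤ r j), ?_⟩
    set S := Finset.univ.filter (fun j => 0 ≤ r j) with hS
    set xb := cand S with hxb
    set xstar : Fin n → ℝ := fun j => if 0 ≤ r j then (1:ℝ) else 0 with hxstar
    have hxstarbox : ∀ j, xstar j ∈ Set.Icc (0:ℝ) 1 := by
      intro j; by_cases h : 0 ≤ r j <;> simp [hxstar, h]
    have hub : ∀ v ∈ {v | ∃ y : Fin n → ℝ, (∀ j, y j ∈ Set.Icc (0:ℝ) 1) ∧
        A.mulVec y = A.mulVec xb ∧ v = dotc c y},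
        v ≤ dotc c xb + (lpOpt A b c - dotc c xN + ε) := by
      rintro v ⟨y, hy, hAy, rfl⟩
      have e1 : dotc c y - dotc c xb = ∑ j, r j * (y j - xb j) := by
        rw [repr_dotc A c u y, repr_dotc A c u xb, hAy]
        have h2 : ∑ j, r j * (y j - xb j)
            = (∑ j, (c j - ∑ i, u i * A i j) * y j) - ∑ j, (c j - ∑ i, u i * A i j) * xb j := by
          rw [← Finset.sum_sub_distrib]
          exact Finset.sum_congr rfl fun j _ => by rw [hr]; ring
        rw [h2]; ring
      have e2 : ∑ j, r j * (y j - xb j) ≤ ∑ j, (max (r j) 0 - r j * xN j) := by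
        refine Finset.sum_le_sum fun j _ => ?_
        obtain ⟨hy0, hy1⟩ := hy j
        obtain ⟨hx0, hx1⟩ := hbox j
        by_cases hf : xN j ∈ Set.Ioo (0:ℝ) 1
        · by_cases hrj : 0 ≤ r j
          · have hxbj : xb j = 1 := hcand1 S j hf (by rw [hS]; exact Finset.mem_filter.mpr ⟨Finset.mem_univ j, hrj⟩)
            rw [hxbj, max_eq_left hrj]
            nlinarith
          · have hxbj : xb j = 0 := hcand0 S j hf (by rw [hS]; intro hmem; exact hrj (Finset.mem_filter.mp hmem).2)
            push_neg at hrj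
            rw [hxbj, max_eq_right hrj.le]
            nlinarith
        · have hxbj : xb j = xN j := hcandN S j hf
          rw [hxbj]
          rcases le_or_gt 0 (r j) with hrj | hrj
          · rw [max_eq_left hrj]; nlinarith
          · rw [max_eq_right hrj.le]; nlinarith
      have e3 : ∑ j, max (r j) 0 = ∑ j, r j * xstar j := by
        refine Finset.sum_congr rfl fun j _ => ?_
        by_cases h : 0 ≤ r j
        · rw [max_eq_left h]; simp [hxstar, h]
        · push_neg at h; rw [max_eq_right h.le]; simp [hxstar, h, not_le.mpr h]
      have e2' : ∑ j, (max (r j) 0 - r j * xN j) = (∑ j, max (r j) 0) - ∑ j, r j * xN j :=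
        Finset.sum_sub_distrib _ _
      have e4a : ∑ j, r j * xstar j = dotc c xstar - ∑ i, u i * A.mulVec xstar i := by
        have := repr_dotc A c u xstar
        have h2 : ∑ j, r j * xstar j = ∑ j, (c j - ∑ i, u i * A i j) * xstar j :=
          Finset.sum_congr rfl fun j _ => by rw [hr]
        rw [h2]; linarith
      have e4b : ∑ j, r j * xN j = dotc c xN - ∑ i, u i * A.mulVec xN i := by
        have := repr_dotc A c u xN
        have h2 : ∑ j, r j * xN j = ∑ j, (c j - ∑ i, u i * A i j) * xN j :=
          Finset.sum_congr rfl fun j _ => by rw [hr]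
        rw [h2]; linarith
      have e5 : dotc c xstar + ∑ i, u i * (b i - A.mulVec xstar i) < lpOpt A b c + ε :=
        hkey xstar hxstarbox
      have e5' : ∑ i, u i * (b i - A.mulVec xstar i)
          = (∑ i, u i * b i) - ∑ i, u i * A.mulVec xstar i := by
        rw [← Finset.sum_sub_distrib]
        exact Finset.sum_congr rfl fun i _ => by ring
      have e6 : 0 ≤ ∑ i, u i * (b i - A.mulVec xN i) :=
        Finset.sum_nonneg fun i _ => mul_nonneg (hu i) (by linarith [hfeas i])
      have e6' : ∑ i, u i * (b i - A.mulVec xN i)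
          = (∑ i, u i * b i) - ∑ i, u i * A.mulVec xN i := by
        rw [← Finset.sum_sub_distrib]
        exact Finset.sum_congr rfl fun i _ => by ring
      rw [e5'] at e5
      rw [e6'] at e6
      linarith
    have hne : (dotc c xb) ∈ {v | ∃ y : Fin n → ℝ, (∀ j, y j ∈ Set.Icc (0:ℝ) 1) ∧
        A.mulVec y = A.mulVec xb ∧ v = dotc c y} := ⟨xb, hcbox S, rfl, rfl⟩
    have hle : lpEq A (A.mulVec xb) c ≤ dotc c xb + (lpOpt A b c - dotc c xN + ε) :=
      csSup_le ⟨_, hne⟩ hub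
    simp only [hgval]
    linarith
  obtain ⟨S0, -, hS0⟩ := Finset.exists_mem_eq_inf'
    (⟨∅, Finset.mem_univ ∅⟩ : (Finset.univ : Finset (Finset (Fin n))).Nonempty) gval
  have hmin : gval S0 ≤ lpOpt A b c - dotc c xN := by
    apply le_of_forall_pos_le_add
    intro ε hε
    obtain ⟨S, hS⟩ := stepA ε hε
    calc gval S0 = Finset.univ.inf' _ gval := hS0.symm
      _ ≤ gval S := Finset.inf'_le _ (Finset.mem_univ S)
      _ ≤ _ := hS
  refine ⟨cand S0, ⟨hc01 S0, ?_⟩, fun j hj => hcandN S0 j hj⟩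
  simp only [hgval] at hmin
  unfold ipGap
  linarith


def branchCount {n : ℕ} : BBTree n → ℕ
  | .leaf => 0
  | .branch _ _ l r => branchCount l + branchCount r + 1

lemma numNodes_eq {n : ℕ} (T : BBTree n) : T.numNodes = 2 * branchCount T + 1 := by
  induction T with
  | leaf => rfl
  | branch x j l r ihl ihr =>
    show l.numNodes + r.numNodes + 1 = 2 * (branchCount l + branchCount r + 1) + 1
    rw [ihl, ihr]; ring

open scoped Classical in
/-- The finite set of candidate labels compatible with fixings `(J0, J1)`. -/
noncomputable def SJ (m : ℕ) {n : ℕ} (GF : Finset (Fin n → ℝ)) (J0 J1 : Finset (Fin n)) :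
    Finset ((Fin n → ℝ) × Finset (Fin n)) :=
  (GF ×ˢ ((Finset.univ : Finset (Finset (Fin n))).filter fun I => I.card ≤ m)).filter
    (fun p => (∀ j ∈ J0, j ∉ p.2 ∧ p.1 j = 0) ∧ (∀ j ∈ J1, j ∉ p.2 ∧ p.1 j = 1))

lemma mem_SJ {m n : ℕ} {GF : Finset (Fin n → ℝ)} {J0 J1 : Finset (Fin n)}
    {p : (Fin n → ℝ) × Finset (Fin n)} :
    p ∈ SJ m GF J0 J1 ↔ (p.1 ∈ GF ∧ p.2.card ≤ m) ∧
      (∀ j ∈ J0, j ∉ p.2 ∧ p.1 j = 0) ∧ (∀ j ∈ J1, j ∉ p.2 ∧ p.1 j = 1) := by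
  unfold SJ
  rw [Finset.mem_filter, Finset.mem_product, Finset.mem_filter]
  simp [and_assoc]

lemma bc_le {m n : ℕ} (A : Matrix (Fin m) (Fin n) ℝ) (b : Fin m → ℝ) (c : Fin n → ℝ)
    (GF : Finset (Fin n → ℝ)) (hGF : ∀ x, x ∈ goodSet A b c → x ∈ GF) :
    ∀ (T : BBTree n) (J0 J1 : Finset (Fin n)), BBValid A b c J0 J1 T →
      branchCount T ≤ (SJ m GF J0 J1).card := by
  intro T
  induction T with
  | leaf => intro J0 J1 _; exact Nat.zero_le _
  | branch xN j l r ihl ihr =>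
    intro J0 J1 hT
    obtain ⟨hbox, hfeas, h0, h1, _hopt, hfrac, hbb, hjf, hj0, hj1, hl, hr⟩ := hT
    obtain ⟨xb, hxbG, hxbagree⟩ := exists_good A b c xN hbox hfeas hbb
    set I : Finset (Fin n) := Finset.univ.filter (fun i => xN i ∈ Set.Ioo (0:ℝ) 1) with hI
    have hjI : j ∈ I := by rw [hI]; exact Finset.mem_filter.mpr ⟨Finset.mem_univ j, hjf⟩
    have hfix0 : ∀ i ∈ J0, i ∉ I ∧ xb i = 0 := by
      intro i hi
      have hxi := h0 i hi
      have hni : xN i ∉ Set.Ioo (0:ℝ) 1 := by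
        rw [hxi]; rintro ⟨hlt, -⟩; exact lt_irrefl 0 hlt
      constructor
      · rw [hI]; intro hmem; exact hni (Finset.mem_filter.mp hmem).2
      · rw [hxbagree i hni, hxi]
    have hfix1 : ∀ i ∈ J1, i ∉ I ∧ xb i = 1 := by
      intro i hi
      have hxi := h1 i hi
      have hni : xN i ∉ Set.Ioo (0:ℝ) 1 := by
        rw [hxi]; rintro ⟨-, hlt⟩; exact lt_irrefl 1 hlt
      constructor
      · rw [hI]; intro hmem; exact hni (Finset.mem_filter.mp hmem).2
      · rw [hxbagree i hni, hxi]
    have hpmem : ((xb, I) : (Fin n → ℝ) × Finset (Fin n)) ∈ SJ m GF J0 J1 :=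
      mem_SJ.mpr ⟨⟨hGF xb hxbG, hfrac⟩, hfix0, hfix1⟩
    have hsub0 : SJ m GF (insert j J0) J1 ⊆ (SJ m GF J0 J1).erase (xb, I) := by
      intro q hq
      obtain ⟨hq1, hq2, hq3⟩ := mem_SJ.mp hq
      refine Finset.mem_erase.mpr ⟨?_, mem_SJ.mpr ⟨hq1, fun j' hj' => hq2 j' (Finset.mem_insert_of_mem hj'), hq3⟩⟩
      intro heq
      have := (hq2 j (Finset.mem_insert_self j J0)).1
      rw [heq] at this
      exact this hjI
    have hsub1 : SJ m GF J0 (insert j J1) ⊆ (SJ m GF J0 J1).erase (xb, I) := by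
      intro q hq
      obtain ⟨hq1, hq2, hq3⟩ := mem_SJ.mp hq
      refine Finset.mem_erase.mpr ⟨?_, mem_SJ.mpr ⟨hq1, hq2, fun j' hj' => hq3 j' (Finset.mem_insert_of_mem hj')⟩⟩
      intro heq
      have := (hq3 j (Finset.mem_insert_self j J1)).1
      rw [heq] at this
      exact this hjI
    have hdisj : Disjoint (SJ m GF (insert j J0) J1) (SJ m GF J0 (insert j J1)) := by
      refine Finset.disjoint_left.mpr fun q hqa hqb => ?_
      have ha := ((mem_SJ.mp hqa).2.1 j (Finset.mem_insert_self j J0)).2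
      have hb := ((mem_SJ.mp hqb).2.2 j (Finset.mem_insert_self j J1)).2
      rw [ha] at hb
      norm_num at hb
    classical
    have hcardU := Finset.card_union_of_disjoint hdisj
    have hsubU : SJ m GF (insert j J0) J1 ∪ SJ m GF J0 (insert j J1)
        ⊆ (SJ m GF J0 J1).erase (xb, I) := Finset.union_subset hsub0 hsub1
    have h2 := Finset.card_le_card hsubU
    have h3 := Finset.card_erase_of_mem hpmem
    have h4 : 1 ≤ (SJ m GF J0 J1).card := Finset.card_pos.mpr ⟨_, hpmem⟩
    have hil := ihl (insert j J0) J1 hl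
    have hir := ihr J0 (insert j J1) hr
    show branchCount l + branchCount r + 1 ≤ _
    omega

lemma card_small_subsets (n m : ℕ) :
    (((Finset.univ : Finset (Finset (Fin n))).filter fun I => I.card ≤ m)).card
      = ∑ i ∈ Finset.range (m+1), n.choose i := by
  classical
  have hsplit : (((Finset.univ : Finset (Finset (Fin n))).filter fun I => I.card ≤ m))
      = (Finset.range (m+1)).biUnion
        (fun k => (Finset.univ : Finset (Finset (Fin n))).filter fun I => I.card = k) := by
    ext I
    simp only [Finset.mem_filter, Finset.mem_univ, true_and, Finset.mem_biUnion,
      Finset.mem_range, Nat.lt_succ_iff]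
    exact ⟨fun h => ⟨I.card, h, rfl⟩, fun ⟨k, hk, he⟩ => he ▸ hk⟩
  rw [hsplit, Finset.card_biUnion]
  · refine Finset.sum_congr rfl fun k _ => ?_
    have h : (Finset.univ : Finset (Finset (Fin n))).filter (fun I => I.card = k)
        = Finset.powersetCard k (Finset.univ : Finset (Fin n)) := by
      rw [Finset.powersetCard_eq_filter, Finset.powerset_univ]
    rw [h, Finset.card_powersetCard, Finset.card_univ, Fintype.card_fin]
  · intro a _ b _ hab
    refine Finset.disjoint_left.mpr fun I hI hI2 => ?_
    have ha := (Finset.mem_filter.mp hI).2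
    have hb := (Finset.mem_filter.mp hI2).2
    exact hab (ha.symm.trans hb)

end S19
end S19AuxSection

/-- the final branch-and-bound tree (rooted at the LP relaxation,
i.e. with no fixings) has at most `2·|G|·Σ_{i=0}^m C(n,i) + 1` nodes. -/
theorem stmt_19 {m n : ℕ} (A : Matrix (Fin m) (Fin n) ℝ) (b : Fin m → ℝ)
    (c : Fin n → ℝ) (T : BBTree n) (hT : BBValid A b c ∅ ∅ T) :
    T.numNodes ≤ 2 * (goodSet A b c).ncard * (∑ i ∈ Finset.range (m + 1), n.choose i) + 1 := by
  classical
  have hGfin : (goodSet A b c).Finite := by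
    have hsub : goodSet A b c ⊆ Set.univ.pi (fun _ : Fin n => ({0, 1} : Set ℝ)) := by
      intro x hx j _
      rcases hx.1 j with h | h <;> simp [h]
    exact (Set.Finite.pi fun _ => (Set.finite_singleton 1).insert 0).subset hsub
  set GF : Finset (Fin n → ℝ) := hGfin.toFinset with hGFdef
  have hGF : ∀ x, x ∈ goodSet A b c → x ∈ GF := fun x hx => hGfin.mem_toFinset.mpr hx
  have hbc := S19.bc_le A b c GF hGF T ∅ ∅ hT
  have hSJcard : (S19.SJ m GF ∅ ∅).card
      ≤ GF.card * ∑ i ∈ Finset.range (m + 1), n.choose i := by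
    have heq : S19.SJ m GF ∅ ∅
        = GF ×ˢ ((Finset.univ : Finset (Finset (Fin n))).filter fun I => I.card ≤ m) := by
      unfold S19.SJ
      apply Finset.filter_true_of_mem
      intro p _
      exact ⟨fun j hj => absurd hj (Finset.notMem_empty j),
        fun j hj => absurd hj (Finset.notMem_empty j)⟩
    rw [heq, Finset.card_product, S19.card_small_subsets]
  have hcardGF : GF.card = (goodSet A b c).ncard :=
    (Set.ncard_eq_toFinset_card _ hGfin).symm
  rw [S19.numNodes_eq]
  have hstep : S19.branchCount T
      ≤ (goodSet A b c).ncard * ∑ i ∈ Finset.range (m + 1), n.choose i := by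
    calc S19.branchCount T ≤ (S19.SJ m GF ∅ ∅).card := hbc
      _ ≤ GF.card * ∑ i ∈ Finset.range (m + 1), n.choose i := hSJcard
      _ = _ := by rw [hcardGF]
  calc 2 * S19.branchCount T + 1
      ≤ 2 * ((goodSet A b c).ncard * ∑ i ∈ Finset.range (m + 1), n.choose i) + 1 := by
        exact Nat.add_le_add_right (Nat.mul_le_mul_left 2 hstep) 1
    _ = 2 * (goodSet A b c).ncard * (∑ i ∈ Finset.range (m + 1), n.choose i) + 1 := by
        rw [mul_assoc]
end
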